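/- Let H ∈ (1/4, 1/2) and set c₁ := Γ(2H+1) sin(πH)/(2π). Then for all real numbers 0 ≤ s ≤ t: c₁ ∫_0^s ∫_ℝ (e^{−(t−r)ξ²} − e^{−(s−r)ξ²})² |ξ|^{1−2H} dξ dr + c₁ ∫_s^t ∫_ℝ e^{−2(t−r)ξ²} |ξ|^{1−2H} dξ dr + (Γ(1+2H) sin(πH)/(4π)) ∫_ℝ (e^{−sξ²} − e^{−tξ²})² |ξ|^{−1−2H} dξ = (Γ(2H)/Γ(H)) · (t − s)^H. -/

import Mathlib

open MeasureTheory

open Real Set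

lemma gauss_moment {u p : ℝ} (hu : 0 < u) (hp : -1 < p) :
    ∫ ξ : ℝ, Real.exp (-u * ξ ^ 2) * |ξ| ^ p
      = Real.Gamma ((p + 1) / 2) * u ^ (-(p + 1) / 2) := by
  have h1 : (fun ξ : ℝ => Real.exp (-u * ξ ^ 2) * |ξ| ^ p)
      = fun ξ : ℝ => (fun x : ℝ => x ^ p * Real.exp (-u * x ^ 2)) |ξ| := by
    ext ξ; simp [sq_abs, mul_comm]
  rw [h1, integral_comp_abs (f := fun x : ℝ => x ^ p * Real.exp (-u * x ^ 2))]
  have h2 : ∫ x in Ioi (0:ℝ), x ^ p * Real.exp (-u * x ^ 2)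
      = u ^ (-(p + 1) / 2) * (1 / 2) * Real.Gamma ((p + 1) / 2) := by
    rw [show (fun x : ℝ => x ^ p * Real.exp (-u * x ^ 2))
        = fun x : ℝ => x ^ p * Real.exp (-u * x ^ (2:ℝ)) by ext x; rw [Real.rpow_two]]
    exact integral_rpow_mul_exp_neg_mul_rpow two_pos hp hu
  rw [h2]; ring

lemma gauss_int {u p : ℝ} (hu : 0 < u) (hp : -1 < p) :
    Integrable fun ξ : ℝ => Real.exp (-u * ξ ^ 2) * |ξ| ^ p := by
  have g := integrable_rpow_mul_exp_neg_mul_sq hu hp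
  have gneg : Integrable fun x : ℝ => (-x) ^ p * Real.exp (-u * x ^ 2) := by
    have h := ((Measure.measurePreserving_neg (volume : Measure ℝ)).integrable_comp_emb
      (Homeomorph.neg ℝ).measurableEmbedding
      (g := fun x : ℝ => x ^ p * Real.exp (-u * x ^ 2))).mpr g
    simpa [Function.comp_def] using h
  refine (g.abs.add gneg.abs).mono' ?_ ?_
  · apply Measurable.aestronglyMeasurable
    exact (Real.measurable_exp.comp ((measurable_id.pow_const 2).const_mul (-u))).mul
      (measurable_abs.pow_const p)
  · filter_upwards with x
    have hb : Real.exp (-u * x ^ 2) * |x| ^ p ≤ |x ^ p * Real.exp (-u * x ^ 2)|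
        + |(-x) ^ p * Real.exp (-u * x ^ 2)| := by
      rcases le_total 0 x with hx | hx
      · have : |x| ^ p = x ^ p := by rw [abs_of_nonneg hx]
        rw [this]
        have h1 : x ^ p * Real.exp (-u * x ^ 2) ≤ |x ^ p * Real.exp (-u * x ^ 2)| := le_abs_self _
        nlinarith [abs_nonneg ((-x) ^ p * Real.exp (-u * x ^ 2)), Real.exp_pos (-u * x ^ 2),
          Real.rpow_nonneg (abs_nonneg x) p]
      · have : |x| ^ p = (-x) ^ p := by rw [abs_of_nonpos hx]
        rw [this]
        have h1 : (-x) ^ p * Real.exp (-u * x ^ 2) ≤ |(-x) ^ p * Real.exp (-u * x ^ 2)| :=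
          le_abs_self _
        nlinarith [abs_nonneg (x ^ p * Real.exp (-u * x ^ 2))]
    calc ‖Real.exp (-u * x ^ 2) * |x| ^ p‖ = Real.exp (-u * x ^ 2) * |x| ^ p := by
          rw [Real.norm_eq_abs, abs_of_nonneg (by positivity)]
      _ ≤ _ := hb

lemma gauss1 {H u : ℝ} (hH : H < 1) (hu : 0 < u) :
    ∫ ξ : ℝ, Real.exp (-u * ξ ^ 2) * |ξ| ^ (1 - 2 * H)
      = Real.Gamma (1 - H) * u ^ (H - 1) := by
  have h := gauss_moment hu (by linarith : (-1:ℝ) < 1 - 2 * H)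
  rw [show (1 - 2 * H + 1) / 2 = 1 - H by ring] at h
  rw [show -(1 - 2 * H + 1) / 2 = H - 1 by ring] at h
  exact h

lemma gauss1_int {H u : ℝ} (hH : H < 1) (hu : 0 < u) :
    Integrable fun ξ : ℝ => Real.exp (-u * ξ ^ 2) * |ξ| ^ (1 - 2 * H) :=
  gauss_int hu (by linarith)

lemma hpt {H : ℝ} (hH0 : 0 < H) (hH2 : H < 1 / 2) (u ξ : ℝ) :
    ξ ^ 2 * Real.exp (-u * ξ ^ 2) * |ξ| ^ (-1 - 2 * H)
      = Real.exp (-u * ξ ^ 2) * |ξ| ^ (1 - 2 * H) := by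
  rcases eq_or_ne ξ 0 with rfl | hξ
  · rw [abs_zero, Real.zero_rpow (by linarith), Real.zero_rpow (by linarith)]
    ring
  · have h0 : (0:ℝ) < |ξ| := abs_pos.mpr hξ
    have : ξ ^ 2 = |ξ| ^ (2:ℝ) := by rw [Real.rpow_two, sq_abs]
    rw [this, mul_assoc, mul_comm (Real.exp _), ← mul_assoc, ← Real.rpow_add h0]
    rw [show (2:ℝ) + (-1 - 2 * H) = 1 - 2 * H by ring]
    ring

lemma int_J {H : ℝ} (hH : 0 < H) {l u c : ℝ} (hlu : l ≤ u) :
    ∫ r in Set.Ioo l u, (c - r) ^ (H - 1) = ((c - l) ^ H - (c - u) ^ H) / H := by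
  rw [← integral_Ioc_eq_integral_Ioo, ← intervalIntegral.integral_of_le hlu,
    intervalIntegral.integral_comp_sub_left (fun x : ℝ => x ^ (H - 1)) c,
    integral_rpow (Or.inl (by linarith)), sub_add_cancel]

lemma intOn_J {H : ℝ} (hH : 0 < H) {l u c : ℝ} (hlu : l ≤ u) :
    IntegrableOn (fun r : ℝ => (c - r) ^ (H - 1)) (Set.Ioo l u) := by
  have h1 : IntervalIntegrable (fun x : ℝ => x ^ (H - 1)) volume (c - l) (c - u) :=
    intervalIntegral.intervalIntegrable_rpow' (by linarith)
  have h2 := h1.comp_sub_left c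
  simp only [sub_sub_cancel] at h2
  rw [← intervalIntegrable_iff_integrableOn_Ioo_of_le hlu]
  exact h2

lemma keyF_integrable {H : ℝ} (hH0 : 0 < H) (hH2 : H < 1 / 2) {a b : ℝ}
    (ha : 0 ≤ a) (hab : a ≤ b) :
    Integrable (Function.uncurry fun u ξ : ℝ =>
        ξ ^ 2 * Real.exp (-u * ξ ^ 2) * |ξ| ^ (-1 - 2 * H))
      ((volume.restrict (Set.Ioo a b)).prod volume) := by
  have hmeas : AEStronglyMeasurable (Function.uncurry fun u ξ : ℝ =>
      ξ ^ 2 * Real.exp (-u * ξ ^ 2) * |ξ| ^ (-1 - 2 * H))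
      ((volume.restrict (Set.Ioo a b)).prod volume) := by
    apply Measurable.aestronglyMeasurable
    have : Measurable fun p : ℝ × ℝ =>
        p.2 ^ 2 * Real.exp (-p.1 * p.2 ^ 2) * |p.2| ^ (-1 - 2 * H) := by
      exact ((measurable_snd.pow_const 2).mul
        ((measurable_fst.neg.mul (measurable_snd.pow_const 2)).exp)).mul
        ((measurable_snd.abs).pow measurable_const)
    exact this
  rw [MeasureTheory.integrable_prod_iff hmeas]
  constructor
  · filter_upwards [ae_restrict_mem measurableSet_Ioo] with u hu
    have hu0 : 0 < u := lt_of_le_of_lt ha hu.1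
    have := gauss1_int (u := u) (by linarith : H < 1) hu0
    exact this.congr (Filter.Eventually.of_forall fun ξ => (hpt hH0 hH2 u ξ).symm)
  · have heq : ∀ᵐ u ∂(volume.restrict (Set.Ioo a b)),
        (∫ ξ : ℝ, ‖ξ ^ 2 * Real.exp (-u * ξ ^ 2) * |ξ| ^ (-1 - 2 * H)‖)
          = Real.Gamma (1 - H) * u ^ (H - 1) := by
      filter_upwards [ae_restrict_mem measurableSet_Ioo] with u hu
      have hu0 : 0 < u := lt_of_le_of_lt ha hu.1
      rw [show (fun ξ : ℝ => ‖ξ ^ 2 * Real.exp (-u * ξ ^ 2) * |ξ| ^ (-1 - 2 * H)‖)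
          = fun ξ : ℝ => Real.exp (-u * ξ ^ 2) * |ξ| ^ (1 - 2 * H) by
        ext ξ; rw [Real.norm_eq_abs, abs_of_nonneg (by positivity), hpt hH0 hH2]]
      exact gauss1 (by linarith) hu0
    have hint : Integrable (fun u : ℝ => Real.Gamma (1 - H) * u ^ (H - 1))
        (volume.restrict (Set.Ioo a b)) := by
      apply Integrable.const_mul
      rw [← IntegrableOn, ← intervalIntegrable_iff_integrableOn_Ioo_of_le hab]
      exact intervalIntegral.intervalIntegrable_rpow' (by linarith)
    exact hint.congr (heq.mono fun u h => h.symm)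

lemma inner_u {H : ℝ} {a b : ℝ} (hab : a ≤ b) (ξ : ℝ) :
    ∫ u in Set.Ioo a b, ξ ^ 2 * Real.exp (-u * ξ ^ 2) * |ξ| ^ (-1 - 2 * H)
      = (Real.exp (-a * ξ ^ 2) - Real.exp (-b * ξ ^ 2)) * |ξ| ^ (-1 - 2 * H) := by
  rw [MeasureTheory.integral_mul_const]
  congr 1
  rcases eq_or_ne ξ 0 with rfl | hξ
  · simp
  · rw [← integral_Ioc_eq_integral_Ioo, ← intervalIntegral.integral_of_le hab]
    have hd : ∀ u ∈ Set.uIcc a b, HasDerivAt (fun v : ℝ => -Real.exp (-v * ξ ^ 2))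
        (ξ ^ 2 * Real.exp (-u * ξ ^ 2)) u := by
      intro u _
      have h1 : HasDerivAt (fun v : ℝ => -v * ξ ^ 2) (-ξ ^ 2) u := by
        simpa using ((hasDerivAt_id u).neg.mul_const (ξ ^ 2))
      have h2 : HasDerivAt (fun v : ℝ => -Real.exp (-v * ξ ^ 2))
          (-(Real.exp (-u * ξ ^ 2) * -ξ ^ 2)) u := (h1.exp).neg
      convert h2 using 1
      ring
    rw [intervalIntegral.integral_eq_sub_of_hasDerivAt hd
      ((Continuous.intervalIntegrable (by fun_prop) a b))]
    ring

lemma L2val {H : ℝ} (hH0 : 0 < H) (hH2 : H < 1 / 2) {a b : ℝ}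
    (ha : 0 ≤ a) (hab : a ≤ b) :
    ∫ ξ : ℝ, (Real.exp (-a * ξ ^ 2) - Real.exp (-b * ξ ^ 2)) * |ξ| ^ (-1 - 2 * H)
      = Real.Gamma (1 - H) * ((b ^ H - a ^ H) / H) := by
  have hint := keyF_integrable hH0 hH2 ha hab
  have swap := MeasureTheory.integral_integral_swap hint
  have lhs : ∫ u in Set.Ioo a b, ∫ ξ : ℝ,
      ξ ^ 2 * Real.exp (-u * ξ ^ 2) * |ξ| ^ (-1 - 2 * H)
        = Real.Gamma (1 - H) * ((b ^ H - a ^ H) / H) := by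
    rw [setIntegral_congr_fun measurableSet_Ioo
      (g := fun u : ℝ => Real.Gamma (1 - H) * u ^ (H - 1)) ?_]
    · rw [MeasureTheory.integral_const_mul, ← integral_Ioc_eq_integral_Ioo,
        ← intervalIntegral.integral_of_le hab, integral_rpow (Or.inl (by linarith)),
        sub_add_cancel]
    · intro u hu
      have hu0 : 0 < u := lt_of_le_of_lt ha hu.1
      show (∫ ξ : ℝ, ξ ^ 2 * Real.exp (-u * ξ ^ 2) * |ξ| ^ (-1 - 2 * H))
        = Real.Gamma (1 - H) * u ^ (H - 1)
      rw [show (fun ξ : ℝ => ξ ^ 2 * Real.exp (-u * ξ ^ 2) * |ξ| ^ (-1 - 2 * H))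
          = fun ξ : ℝ => Real.exp (-u * ξ ^ 2) * |ξ| ^ (1 - 2 * H) from
        funext fun ξ => hpt hH0 hH2 u ξ]
      exact gauss1 (by linarith) hu0
  have rhs : ∫ ξ : ℝ, ∫ u in Set.Ioo a b,
      ξ ^ 2 * Real.exp (-u * ξ ^ 2) * |ξ| ^ (-1 - 2 * H)
        = ∫ ξ : ℝ, (Real.exp (-a * ξ ^ 2) - Real.exp (-b * ξ ^ 2)) * |ξ| ^ (-1 - 2 * H) :=
    integral_congr_ae (Filter.Eventually.of_forall fun ξ => inner_u hab ξ)
  rw [← rhs, ← swap, lhs]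

lemma L2int {H : ℝ} (hH0 : 0 < H) (hH2 : H < 1 / 2) {a b : ℝ}
    (ha : 0 ≤ a) (hab : a ≤ b) :
    Integrable fun ξ : ℝ =>
      (Real.exp (-a * ξ ^ 2) - Real.exp (-b * ξ ^ 2)) * |ξ| ^ (-1 - 2 * H) := by
  have hint := (keyF_integrable hH0 hH2 ha hab).integral_prod_right
  exact hint.congr (Filter.Eventually.of_forall fun ξ => inner_u hab ξ)

lemma inner_A {H : ℝ} (hH1 : H < 1) {a b : ℝ} (ha : 0 < a) (hb : 0 < b) :
    ∫ ξ : ℝ, (Real.exp (-a * ξ ^ 2) - Real.exp (-b * ξ ^ 2)) ^ 2 * |ξ| ^ (1 - 2 * H)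
      = Real.Gamma (1 - H) *
          ((2 * a) ^ (H - 1) - 2 * (a + b) ^ (H - 1) + (2 * b) ^ (H - 1)) := by
  have hexp : ∀ ξ : ℝ,
      (Real.exp (-a * ξ ^ 2) - Real.exp (-b * ξ ^ 2)) ^ 2 * |ξ| ^ (1 - 2 * H)
        = Real.exp (-(2 * a) * ξ ^ 2) * |ξ| ^ (1 - 2 * H)
          - 2 * (Real.exp (-(a + b) * ξ ^ 2) * |ξ| ^ (1 - 2 * H))
          + Real.exp (-(2 * b) * ξ ^ 2) * |ξ| ^ (1 - 2 * H) := by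
    intro ξ
    have h1 : Real.exp (-a * ξ ^ 2) * Real.exp (-a * ξ ^ 2)
        = Real.exp (-(2 * a) * ξ ^ 2) := by rw [← Real.exp_add]; congr 1; ring
    have h2 : Real.exp (-a * ξ ^ 2) * Real.exp (-b * ξ ^ 2)
        = Real.exp (-(a + b) * ξ ^ 2) := by rw [← Real.exp_add]; congr 1; ring
    have h3 : Real.exp (-b * ξ ^ 2) * Real.exp (-b * ξ ^ 2)
        = Real.exp (-(2 * b) * ξ ^ 2) := by rw [← Real.exp_add]; congr 1; ring
    linear_combination (|ξ| ^ (1 - 2 * H)) * h1 - (2 * |ξ| ^ (1 - 2 * H)) * h2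
      + (|ξ| ^ (1 - 2 * H)) * h3
  rw [integral_congr_ae (Filter.Eventually.of_forall hexp)]
  have i1 := gauss1_int hH1 (by linarith : (0:ℝ) < 2 * a)
  have i2 := (gauss1_int hH1 (by linarith : (0:ℝ) < a + b)).const_mul 2
  have i3 := gauss1_int hH1 (by linarith : (0:ℝ) < 2 * b)
  have i12 : Integrable (fun ξ : ℝ => Real.exp (-(2 * a) * ξ ^ 2) * |ξ| ^ (1 - 2 * H)
      - 2 * (Real.exp (-(a + b) * ξ ^ 2) * |ξ| ^ (1 - 2 * H))) volume := i1.sub i2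
  rw [MeasureTheory.integral_add i12 i3, MeasureTheory.integral_sub i1 i2,
    integral_const_mul, gauss1 hH1 (by linarith : (0:ℝ) < 2 * a),
    gauss1 hH1 (by linarith : (0:ℝ) < a + b), gauss1 hH1 (by linarith : (0:ℝ) < 2 * b)]
  ring

/-- Spectral identity underlying the decomposition of the solution of the linear
stochastic heat equation plus a smooth Gaussian process into a fBm with Hurst
parameter `H/2`: for `H ∈ (1/4, 1/2)`, `c₁ = Γ(2H+1) sin(πH)/(2π)` and
`0 ≤ s ≤ t`,
`c₁ ∫_0^s ∫_ℝ (e^{−(t−r)ξ²} − e^{−(s−r)ξ²})² |ξ|^{1−2H} dξ dr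
 + c₁ ∫_s^t ∫_ℝ e^{−2(t−r)ξ²} |ξ|^{1−2H} dξ dr
 + (Γ(1+2H) sin(πH)/(4π)) ∫_ℝ (e^{−sξ²} − e^{−tξ²})² |ξ|^{−1−2H} dξ
 = (Γ(2H)/Γ(H)) (t − s)^H`. -/
theorem stmt12 (H : ℝ) (hH1 : 1 / 4 < H) (hH2 : H < 1 / 2)
    (s t : ℝ) (hs : 0 ≤ s) (hst : s ≤ t) :
    (Real.Gamma (2 * H + 1) * Real.sin (Real.pi * H) / (2 * Real.pi)) *
        (∫ r in Set.Ioo (0 : ℝ) s, ∫ ξ : ℝ,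
          (Real.exp (-(t - r) * ξ ^ 2) - Real.exp (-(s - r) * ξ ^ 2)) ^ 2 *
            |ξ| ^ (1 - 2 * H)) +
      (Real.Gamma (2 * H + 1) * Real.sin (Real.pi * H) / (2 * Real.pi)) *
        (∫ r in Set.Ioo s t, ∫ ξ : ℝ,
          Real.exp (-2 * (t - r) * ξ ^ 2) * |ξ| ^ (1 - 2 * H)) +
      (Real.Gamma (1 + 2 * H) * Real.sin (Real.pi * H) / (4 * Real.pi)) *
        (∫ ξ : ℝ, (Real.exp (-s * ξ ^ 2) - Real.exp (-t * ξ ^ 2)) ^ 2 *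
          |ξ| ^ (-1 - 2 * H)) =
      (Real.Gamma (2 * H) / Real.Gamma H) * (t - s) ^ H := by
  have hH0 : (0:ℝ) < H := by linarith
  have hHlt1 : H < 1 := by linarith
  have ht : (0:ℝ) ≤ t := le_trans hs hst
  -- Term A
  have hA : (∫ r in Set.Ioo (0 : ℝ) s, ∫ ξ : ℝ,
      (Real.exp (-(t - r) * ξ ^ 2) - Real.exp (-(s - r) * ξ ^ 2)) ^ 2 * |ξ| ^ (1 - 2 * H))
        = Real.Gamma (1 - H) * (2 ^ (H - 1) * ((t ^ H - (t - s) ^ H) / H)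
          - 2 * (2 ^ (H - 1) * ((((t + s) / 2) ^ H - ((t + s) / 2 - s) ^ H) / H))
          + 2 ^ (H - 1) * ((s ^ H - (0:ℝ) ^ H) / H)) := by
    rw [setIntegral_congr_fun measurableSet_Ioo
      (g := fun r : ℝ => Real.Gamma (1 - H) * (2 ^ (H - 1) * (t - r) ^ (H - 1)
        - 2 * (2 ^ (H - 1) * ((t + s) / 2 - r) ^ (H - 1))
        + 2 ^ (H - 1) * (s - r) ^ (H - 1))) ?_]
    · have iJ1 : IntegrableOn (fun r : ℝ => (t - r) ^ (H - 1)) (Set.Ioo (0:ℝ) s) :=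
        intOn_J hH0 hs
      have iJ2 : IntegrableOn (fun r : ℝ => ((t + s) / 2 - r) ^ (H - 1)) (Set.Ioo (0:ℝ) s) :=
        intOn_J hH0 hs
      have iJ3 : IntegrableOn (fun r : ℝ => (s - r) ^ (H - 1)) (Set.Ioo (0:ℝ) s) :=
        intOn_J hH0 hs
      rw [integral_const_mul]
      have i1 := iJ1.const_mul ((2:ℝ) ^ (H - 1))
      have i2 := (iJ2.const_mul ((2:ℝ) ^ (H - 1))).const_mul 2
      have i3 := iJ3.const_mul ((2:ℝ) ^ (H - 1))
      have i12 : IntegrableOn (fun r : ℝ => 2 ^ (H - 1) * (t - r) ^ (H - 1)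
          - 2 * (2 ^ (H - 1) * ((t + s) / 2 - r) ^ (H - 1))) (Set.Ioo (0:ℝ) s) := i1.sub i2
      rw [MeasureTheory.integral_add i12 i3, MeasureTheory.integral_sub i1 i2,
        integral_const_mul, integral_const_mul, integral_const_mul, integral_const_mul,
        int_J hH0 hs (c := t), int_J hH0 hs (c := (t + s) / 2), int_J hH0 hs (c := s)]
      rw [sub_zero, sub_zero, sub_zero, sub_self]
    · intro r hr
      obtain ⟨hr1, hr2⟩ := hr
      have h1 : (0:ℝ) < t - r := by linarith
      have h2 : (0:ℝ) < s - r := by linarith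
      have h3 : (0:ℝ) ≤ (t + s) / 2 - r := by linarith
      show (∫ ξ : ℝ, (Real.exp (-(t - r) * ξ ^ 2) - Real.exp (-(s - r) * ξ ^ 2)) ^ 2 *
        |ξ| ^ (1 - 2 * H)) = _
      rw [inner_A hHlt1 h1 h2]
      congr 1
      rw [Real.mul_rpow (by norm_num) h1.le,
        show (t - r) + (s - r) = 2 * ((t + s) / 2 - r) by ring,
        Real.mul_rpow (by norm_num) h3, Real.mul_rpow (by norm_num) h2.le]
  -- Term B
  have hB : (∫ r in Set.Ioo s t, ∫ ξ : ℝ,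
      Real.exp (-2 * (t - r) * ξ ^ 2) * |ξ| ^ (1 - 2 * H))
        = Real.Gamma (1 - H) * (2 ^ (H - 1) * (((t - s) ^ H - (0:ℝ) ^ H) / H)) := by
    rw [setIntegral_congr_fun measurableSet_Ioo
      (g := fun r : ℝ => Real.Gamma (1 - H) * (2 ^ (H - 1) * (t - r) ^ (H - 1))) ?_]
    · rw [integral_const_mul, integral_const_mul, int_J hH0 hst (c := t), sub_self]
    · intro r hr
      obtain ⟨hr1, hr2⟩ := hr
      have h1 : (0:ℝ) < t - r := by linarith
      show (∫ ξ : ℝ, Real.exp (-2 * (t - r) * ξ ^ 2) * |ξ| ^ (1 - 2 * H)) = _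
      rw [show (fun ξ : ℝ => Real.exp (-2 * (t - r) * ξ ^ 2) * |ξ| ^ (1 - 2 * H))
          = fun ξ : ℝ => Real.exp (-(2 * (t - r)) * ξ ^ 2) * |ξ| ^ (1 - 2 * H) from
        funext fun ξ => by norm_num]
      rw [gauss1 hHlt1 (by linarith : (0:ℝ) < 2 * (t - r)),
        Real.mul_rpow (by norm_num) h1.le]
  -- Term C
  have hC : (∫ ξ : ℝ, (Real.exp (-s * ξ ^ 2) - Real.exp (-t * ξ ^ 2)) ^ 2 *
      |ξ| ^ (-1 - 2 * H))
        = Real.Gamma (1 - H) * (((t + s) ^ H - (2 * s) ^ H) / H)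
          - Real.Gamma (1 - H) * (((2 * t) ^ H - (t + s) ^ H) / H) := by
    have hexp : ∀ ξ : ℝ,
        (Real.exp (-s * ξ ^ 2) - Real.exp (-t * ξ ^ 2)) ^ 2 * |ξ| ^ (-1 - 2 * H)
          = (Real.exp (-(2 * s) * ξ ^ 2) - Real.exp (-(t + s) * ξ ^ 2)) * |ξ| ^ (-1 - 2 * H)
            - (Real.exp (-(t + s) * ξ ^ 2) - Real.exp (-(2 * t) * ξ ^ 2)) *
              |ξ| ^ (-1 - 2 * H) := by
      intro ξ
      have h1 : Real.exp (-s * ξ ^ 2) * Real.exp (-s * ξ ^ 2)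
          = Real.exp (-(2 * s) * ξ ^ 2) := by rw [← Real.exp_add]; congr 1; ring
      have h2 : Real.exp (-s * ξ ^ 2) * Real.exp (-t * ξ ^ 2)
          = Real.exp (-(t + s) * ξ ^ 2) := by rw [← Real.exp_add]; congr 1; ring
      have h3 : Real.exp (-t * ξ ^ 2) * Real.exp (-t * ξ ^ 2)
          = Real.exp (-(2 * t) * ξ ^ 2) := by rw [← Real.exp_add]; congr 1; ring
      linear_combination (|ξ| ^ (-1 - 2 * H)) * h1 - (2 * |ξ| ^ (-1 - 2 * H)) * h2
        + (|ξ| ^ (-1 - 2 * H)) * h3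
    rw [integral_congr_ae (Filter.Eventually.of_forall hexp),
      MeasureTheory.integral_sub
        (L2int hH0 hH2 (by linarith : (0:ℝ) ≤ 2 * s) (by linarith : 2 * s ≤ t + s))
        (L2int hH0 hH2 (by linarith : (0:ℝ) ≤ t + s) (by linarith : t + s ≤ 2 * t)),
      L2val hH0 hH2 (by linarith : (0:ℝ) ≤ 2 * s) (by linarith : 2 * s ≤ t + s),
      L2val hH0 hH2 (by linarith : (0:ℝ) ≤ t + s) (by linarith : t + s ≤ 2 * t)]
  rw [hA, hB, hC]
  -- algebraic endgame
  have hzH : (0:ℝ) ^ H = 0 := Real.zero_rpow (ne_of_gt hH0)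
  have hmsplit : ((t + s) / 2) ^ H = (t + s) ^ H / 2 ^ H :=
    Real.div_rpow (by linarith) (by norm_num) H
  have hmsplit2 : ((t + s) / 2 - s) ^ H = (t - s) ^ H / 2 ^ H := by
    rw [show (t + s) / 2 - s = (t - s) / 2 by ring]
    exact Real.div_rpow (by linarith) (by norm_num) H
  have h2s : (2 * s) ^ H = 2 ^ H * s ^ H := Real.mul_rpow (by norm_num) hs
  have h2t : (2 * t) ^ H = 2 ^ H * t ^ H := Real.mul_rpow (by norm_num) ht
  have h2half : (2:ℝ) ^ (H - 1) = 2 ^ H / 2 := by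
    rw [Real.rpow_sub (by norm_num), Real.rpow_one]
  rw [hzH, hmsplit, hmsplit2, h2s, h2t, h2half]
  -- Gamma identities
  have hG21 : Real.Gamma (2 * H + 1) = 2 * H * Real.Gamma (2 * H) :=
    Real.Gamma_add_one (by positivity)
  have hG12 : Real.Gamma (1 + 2 * H) = 2 * H * Real.Gamma (2 * H) := by
    rw [add_comm]; exact hG21
  have hsin : 0 < Real.sin (Real.pi * H) := by
    apply Real.sin_pos_of_pos_of_lt_pi
    · positivity
    · nlinarith [Real.pi_pos]
  have hGH : 0 < Real.Gamma H := Real.Gamma_pos_of_pos hH0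
  have hrefl := Real.Gamma_mul_Gamma_one_sub H
  have key : Real.Gamma H * Real.Gamma (1 - H) * Real.sin (Real.pi * H) = Real.pi := by
    rw [hrefl]; field_simp
  have hG1 : Real.Gamma (1 - H) = Real.pi / (Real.Gamma H * Real.sin (Real.pi * H)) := by
    rw [eq_div_iff (by positivity)]
    linear_combination key
  rw [hG21, hG12, hG1]
  have hE : (0:ℝ) < (2:ℝ) ^ H := Real.rpow_pos_of_pos (by norm_num) H
  have hpi : (0:ℝ) < Real.pi := Real.pi_pos
  have hsne : Real.sin (Real.pi * H) ≠ 0 := hsin.ne'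
  have hsne' : Real.sin (H * Real.pi) ≠ 0 := by rw [mul_comm]; exact hsne
  field_simp
  ring
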